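/- arXiv:2305.19963 — 2 statements merged into one kernel-verified Lean document; each statement's English description precedes it below -/
import Mathlib

section
/- Let u and v be two global solutions of the nonlinear obstacle problem on all of ℝ^d such that u(x) − v(x) → 0 as |x| → ∞. Then u = v identically on ℝ^d. -/
open MeasureTheory Metric Filter

attribute [local instance] Matrix.normedAddCommGroup Matrix.normedSpace

noncomputable def matOpNorm {d : ℕ} (M : Matrix (Fin d) (Fin d) ℝ) : ℝ :=
  ‖(Matrix.toEuclideanCLM (𝕜 := ℝ) M : EuclideanSpace ℝ (Fin d) →L[ℝ] EuclideanSpace ℝ (Fin d))‖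

def IsUniformlyElliptic {d : ℕ} (F : Matrix (Fin d) (Fin d) ℝ → ℝ) (Λ : ℝ) : Prop :=
  1 ≤ Λ ∧ ∀ M P : Matrix (Fin d) (Fin d) ℝ, M.IsSymm → P.IsSymm → P.PosSemidef →
    (1 / Λ) * matOpNorm P ≤ F (M + P) - F M ∧ F (M + P) - F M ≤ Λ * matOpNorm P

def IsGoodOperator {d : ℕ} (F : Matrix (Fin d) (Fin d) ℝ → ℝ) (Λ : ℝ) : Prop :=
  IsUniformlyElliptic F Λ ∧ ConvexOn ℝ {M | M.IsSymm} F ∧ ContDiffOn ℝ 1 F {M | M.IsSymm}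

/-- `u` solves the nonlinear obstacle problem for `F` on `Ω`. -/
def IsSolutionOn {d : ℕ} (F : Matrix (Fin d) (Fin d) ℝ → ℝ)
    (u : EuclideanSpace ℝ (Fin d) → ℝ) (Ω : Set (EuclideanSpace ℝ (Fin d))) : Prop :=
  ContDiffOn ℝ 1 u Ω ∧
  (∀ x ∈ Ω, ∃ (K : NNReal) (t : Set (EuclideanSpace ℝ (Fin d))),
    t ∈ nhdsWithin x Ω ∧ LipschitzOnWith K (gradient u) t) ∧
  (∀ x ∈ Ω, 0 ≤ u x) ∧
  ∃ H : EuclideanSpace ℝ (Fin d) → Matrix (Fin d) (Fin d) ℝ,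
    ∀ᵐ x ∂(volume : Measure (EuclideanSpace ℝ (Fin d))), x ∈ Ω →
      (H x).IsSymm ∧
      HasFDerivAt (gradient u)
        (Matrix.toEuclideanCLM (𝕜 := ℝ) (H x) :
          EuclideanSpace ℝ (Fin d) →L[ℝ] EuclideanSpace ℝ (Fin d)) x ∧
      F (H x) ≤ 1 ∧ (0 < u x → F (H x) = 1)

def contactSet {d : ℕ} (u : EuclideanSpace ℝ (Fin d) → ℝ) : Set (EuclideanSpace ℝ (Fin d)) :=
  {x | u x = 0}

def MemGc {d : ℕ} (F : Matrix (Fin d) (Fin d) ℝ → ℝ)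
    (u : EuclideanSpace ℝ (Fin d) → ℝ) : Prop :=
  IsSolutionOn F u Set.univ ∧ (contactSet u).Nonempty ∧ IsCompact (contactSet u)

noncomputable def quadPoly {d : ℕ} (A : Matrix (Fin d) (Fin d) ℝ)
    (x₀ : EuclideanSpace ℝ (Fin d)) (a : ℝ) (x : EuclideanSpace ℝ (Fin d)) : ℝ :=
  (1/2) * (inner ℝ (x - x₀) (Matrix.toEuclideanCLM (𝕜 := ℝ) A (x - x₀)) : ℝ) + a

def MemPc {d : ℕ} (F : Matrix (Fin d) (Fin d) ℝ → ℝ)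
    (Q : EuclideanSpace ℝ (Fin d) → ℝ) : Prop :=
  ∃ (A : Matrix (Fin d) (Fin d) ℝ) (x₀ : EuclideanSpace ℝ (Fin d)) (a : ℝ),
    A.IsSymm ∧ A.PosDef ∧ F A = 1 ∧ a ≤ 0 ∧ Q = quadPoly A x₀ a

/-- `f x = O(|x|^{2-d})` as `|x| → ∞`. -/
def DecaysAtInfinity (d : ℕ) (f : EuclideanSpace ℝ (Fin d) → ℝ) : Prop :=
  ∃ C R : ℝ, 0 < C ∧ 0 < R ∧ ∀ x : EuclideanSpace ℝ (Fin d),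
    R ≤ ‖x‖ → |f x| ≤ C * ‖x‖ ^ ((2 : ℝ) - d)

lemma lip_image_null {d : ℕ} {f : EuclideanSpace ℝ (Fin d) → EuclideanSpace ℝ (Fin d)}
    {t : Set (EuclideanSpace ℝ (Fin d))} {K : NNReal} (hf : LipschitzOnWith K f t)
    (ht : volume t = 0) : volume (f '' t) = 0 := by
  have h1 : (μH[(Module.finrank ℝ (EuclideanSpace ℝ (Fin d)) : ℝ)] :
      Measure (EuclideanSpace ℝ (Fin d))) t = 0 := by
    rw [Measure.isAddLeftInvariant_eq_smul
      (μH[(Module.finrank ℝ (EuclideanSpace ℝ (Fin d)) : ℝ)] :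
        Measure (EuclideanSpace ℝ (Fin d))) volume, Measure.smul_apply, ht, smul_zero]
  have h2 : (μH[(Module.finrank ℝ (EuclideanSpace ℝ (Fin d)) : ℝ)] :
      Measure (EuclideanSpace ℝ (Fin d))) (f '' t) = 0 := by
    have h := hf.hausdorffMeasure_image_le
      (d := (Module.finrank ℝ (EuclideanSpace ℝ (Fin d)) : ℝ)) (by positivity)
    refine le_antisymm (h.trans ?_) zero_le
    rw [h1, mul_zero]
  rw [Measure.isAddLeftInvariant_eq_smul (volume : Measure (EuclideanSpace ℝ (Fin d)))
    (μH[(Module.finrank ℝ (EuclideanSpace ℝ (Fin d)) : ℝ)] :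
      Measure (EuclideanSpace ℝ (Fin d))), Measure.smul_apply, h2, smul_zero]

lemma second_deriv_test {φ ψ : ℝ → ℝ} {c : ℝ}
    (hφ : ∀ t, HasDerivAt φ (ψ t) t) (hψ : HasDerivAt ψ c 0)
    (hmax : IsLocalMax φ 0) : c ≤ 0 := by
  by_contra hc
  push_neg at hc
  have hψ0 : ψ 0 = 0 := hmax.hasDerivAt_eq_zero (hφ 0)
  -- slope of ψ tends to c > 0, so ψ > 0 on (0, δ)
  have hslope := hasDerivAt_iff_tendsto_slope.1 hψ
  have hpos : ∀ᶠ t in nhdsWithin 0 (Set.Ioi (0:ℝ)), 0 < ψ t := by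
    have h2 : ∀ᶠ t in nhdsWithin 0 {(0:ℝ)}ᶜ, 0 < slope ψ 0 t :=
      hslope.eventually (eventually_gt_nhds hc)
    have h3 : nhdsWithin (0:ℝ) (Set.Ioi 0) ≤ nhdsWithin 0 {(0:ℝ)}ᶜ :=
      nhdsWithin_mono _ (by intro x hx; simpa using (ne_of_gt hx))
    filter_upwards [h3 h2, self_mem_nhdsWithin] with t ht ht'
    have htpos : (0:ℝ) < t := Set.mem_Ioi.1 ht'
    have : slope ψ 0 t = ψ t / t := by
      simp [slope_def_field, hψ0]
    rw [this] at ht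
    have := mul_pos ht htpos
    rwa [div_mul_cancel₀ _ (ne_of_gt htpos)] at this
  obtain ⟨δ, hδ, hδpos⟩ := (nhdsGT_basis (0:ℝ)).eventually_iff.1 hpos
  -- φ is strictly monotone on [0, δ/?]; get contradiction with local max
  have hmono : StrictMonoOn φ (Set.Icc 0 δ) := by
    apply strictMonoOn_of_deriv_pos (convex_Icc 0 δ)
    · exact fun t _ => (hφ t).continuousAt.continuousWithinAt
    · intro t ht
      rw [interior_Icc] at ht
      rw [(hφ t).deriv]
      exact hδpos ⟨ht.1, ht.2⟩
  obtain ⟨ε, hε, hεmax⟩ := Metric.eventually_nhds_iff.1 hmax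
  set t := min δ (ε/2) with htdef
  have ht0 : 0 < t := lt_min hδ (by linarith)
  have h1 : φ 0 < φ t :=
    hmono (by constructor <;> simp [le_of_lt hδ]) ⟨le_of_lt ht0, min_le_left _ _⟩ ht0
  have h2 : φ t ≤ φ 0 := by
    apply hεmax
    rw [Real.dist_eq]
    rw [sub_zero, abs_of_pos ht0]
    calc t ≤ ε/2 := min_le_right _ _
    _ < ε := by linarith
  linarith

/-- Directional second-derivative test at a local max. -/
lemma dir_second_deriv_test {d : ℕ} {f : EuclideanSpace ℝ (Fin d) → ℝ}
    {g : EuclideanSpace ℝ (Fin d) → EuclideanSpace ℝ (Fin d)}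
    {D : EuclideanSpace ℝ (Fin d) →L[ℝ] EuclideanSpace ℝ (Fin d)}
    {x ξ : EuclideanSpace ℝ (Fin d)}
    (hf : ∀ y, HasFDerivAt f ((InnerProductSpace.toDual ℝ _) (g y)) y)
    (hg : HasFDerivAt g D x) (hmax : IsLocalMax f x) :
    (inner ℝ ξ (D ξ) : ℝ) ≤ 0 := by
  set α : ℝ → EuclideanSpace ℝ (Fin d) := fun t => x + t • ξ with hα
  have hαd : ∀ t : ℝ, HasDerivAt α ξ t := by
    intro t
    simpa [hα] using ((hasDerivAt_id t).smul_const ξ).const_add x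
  have hα0 : α 0 = x := by simp [hα]
  set φ : ℝ → ℝ := fun t => f (α t) with hφdef
  set ψ : ℝ → ℝ := fun t => (inner ℝ ξ (g (α t)) : ℝ) with hψdef
  have hφ : ∀ t, HasDerivAt φ (ψ t) t := by
    intro t
    have h1 := (hf (α t)).comp_hasDerivAt t (hαd t)
    have : φ = f ∘ α := rfl
    rw [this]
    exact h1.congr_deriv (real_inner_comm ξ (g (α t)))
  have hψ : HasDerivAt ψ ((inner ℝ ξ (D ξ) : ℝ)) 0 := by
    have h2 : HasDerivAt (fun t => g (α t)) (D ξ) 0 := by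
      have hg' : HasFDerivAt g D (α 0) := by rwa [hα0]
      exact hg'.comp_hasDerivAt 0 (hαd 0)
    exact ((innerSL ℝ ξ).hasFDerivAt.comp_hasDerivAt 0 h2)
  have hmax' : IsLocalMax φ 0 := by
    have hc : ContinuousAt α 0 := (hαd 0).continuousAt
    have := hmax
    unfold IsLocalMax IsMaxFilter at this ⊢
    have h4 : Tendsto α (nhds 0) (nhds x) := by rw [← hα0]; exact hc
    filter_upwards [h4.eventually this] with t ht
    simpa [φ, hα0] using ht
  exact second_deriv_test hφ hψ hmax'

-- quadratic form to PosSemidef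
lemma posSemidef_of_inner {d : ℕ} {P : Matrix (Fin d) (Fin d) ℝ} (hP : P.IsSymm)
    (h : ∀ ξ : EuclideanSpace ℝ (Fin d),
      0 ≤ (inner ℝ ξ ((Matrix.toEuclideanCLM (𝕜 := ℝ) P) ξ) : ℝ)) : P.PosSemidef := by
  rw [Matrix.posSemidef_iff_dotProduct_mulVec]
  constructor
  · rwa [Matrix.IsHermitian, Matrix.conjTranspose_eq_transpose_of_trivial]
  · intro x
    have := h ((WithLp.equiv 2 _).symm x)
    simpa [PiLp.inner_apply, RCLike.inner_apply, starRingEnd_apply, dotProduct,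
      Matrix.mulVec, Matrix.toLin'_apply, mul_comm] using this

-- contact point lemma: equal Hessian CLMs
lemma contact_clm_eq {d : ℕ} {Λ : ℝ} {F : Matrix (Fin d) (Fin d) ℝ → ℝ}
    (hell : IsUniformlyElliptic F Λ) {Mu Mv : Matrix (Fin d) (Fin d) ℝ}
    (hMu : Mu.IsSymm) (hMv : Mv.IsSymm) (hFu : F Mu = 1) (hFv : F Mv ≤ 1)
    (hq : ∀ ξ : EuclideanSpace ℝ (Fin d),
      (inner ℝ ξ ((Matrix.toEuclideanCLM (𝕜 := ℝ) Mu - Matrix.toEuclideanCLM (𝕜 := ℝ) Mv) ξ) : ℝ) ≤ 0) :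
    (Matrix.toEuclideanCLM (𝕜 := ℝ) Mu : EuclideanSpace ℝ (Fin d) →L[ℝ] _)
      = Matrix.toEuclideanCLM (𝕜 := ℝ) Mv := by
  set P : Matrix (Fin d) (Fin d) ℝ := Mv - Mu with hPdef
  have hPs : P.IsSymm := by
    simp only [Matrix.IsSymm, hPdef, Matrix.transpose_sub, hMu.eq, hMv.eq]
  have hclm : (Matrix.toEuclideanCLM (𝕜 := ℝ) P : EuclideanSpace ℝ (Fin d) →L[ℝ] _)
      = Matrix.toEuclideanCLM (𝕜 := ℝ) Mv - Matrix.toEuclideanCLM (𝕜 := ℝ) Mu :=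
    map_sub _ _ _
  have hpsd : P.PosSemidef := by
    apply posSemidef_of_inner hPs
    intro ξ
    have := hq ξ
    rw [hclm]
    simp only [ContinuousLinearMap.sub_apply, inner_sub_right] at this ⊢
    linarith
  have h2 := (hell.2 Mu P hMu hPs hpsd).1
  have hΛ : 0 < Λ := lt_of_lt_of_le one_pos hell.1
  have h3 : Mu + P = Mv := by rw [hPdef]; abel
  rw [h3, hFu] at h2
  have h4 : matOpNorm P ≤ 0 := by
    have h5 : (1/Λ) * matOpNorm P ≤ 0 := by linarith
    nlinarith [norm_nonneg ((Matrix.toEuclideanCLM (𝕜 := ℝ) P :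
      EuclideanSpace ℝ (Fin d) →L[ℝ] _)), one_div_pos.2 hΛ]
  have h6 : (Matrix.toEuclideanCLM (𝕜 := ℝ) P : EuclideanSpace ℝ (Fin d) →L[ℝ] _) = 0 := by
    rw [← norm_le_zero_iff]
    exact h4
  have := hclm.symm.trans h6
  rw [sub_eq_zero] at this
  exact this.symm

lemma lipschitzOnWith_sub {α : Type*} [PseudoMetricSpace α]
    {E : Type*} [SeminormedAddCommGroup E]
    {K K' : NNReal} {f g : α → E} {s : Set α}
    (hf : LipschitzOnWith K f s) (hg : LipschitzOnWith K' g s) :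
    LipschitzOnWith (K + K') (fun x => f x - g x) s := by
  rw [lipschitzOnWith_iff_dist_le_mul] at hf hg ⊢
  intro x hx y hy
  calc dist (f x - g x) (f y - g y) ≤ dist (f x) (f y) + dist (g x) (g y) :=
        dist_sub_sub_le _ _ _ _
  _ ≤ K * dist x y + K' * dist x y := add_le_add (hf x hx y hy) (hg x hx y hy)
  _ = (K + K' : NNReal) * dist x y := by push_cast; ring


set_option maxHeartbeats 2000000 in
lemma one_sided {d : ℕ} (hd : 3 ≤ d) {Λ : ℝ}
    {F : Matrix (Fin d) (Fin d) ℝ → ℝ} (hell : IsUniformlyElliptic F Λ)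
    {u v : EuclideanSpace ℝ (Fin d) → ℝ}
    (hu : IsSolutionOn F u Set.univ) (hv : IsSolutionOn F v Set.univ)
    (hlim : Filter.Tendsto (fun x => u x - v x)
      (Filter.cocompact (EuclideanSpace ℝ (Fin d))) (nhds 0)) :
    ∀ x, u x ≤ v x := by
  by_contra hcon
  push_neg at hcon
  obtain ⟨y, hy⟩ := hcon
  -- basic data
  have hud : Differentiable ℝ u := (contDiffOn_univ.mp hu.1).differentiable one_ne_zero
  have hvd : Differentiable ℝ v := (contDiffOn_univ.mp hv.1).differentiable one_ne_zero
  set w : EuclideanSpace ℝ (Fin d) → ℝ := fun x => u x - v x with hwdef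
  have hwc : Continuous w := (hud.continuous).sub hvd.continuous
  have h0 : 0 < w y := by simp [hwdef]; linarith
  -- the gradient difference map
  set g : EuclideanSpace ℝ (Fin d) → EuclideanSpace ℝ (Fin d) :=
    fun z => gradient u z - gradient v z with hgdef
  have hgrad : ∀ z, HasFDerivAt w ((InnerProductSpace.toDual ℝ _) (g z)) z := by
    intro z
    have h1 : HasFDerivAt u ((InnerProductSpace.toDual ℝ _) (gradient u z)) z :=
      hasGradientAt_iff_hasFDerivAt.1 (hud z).hasGradientAt
    have h2 : HasFDerivAt v ((InnerProductSpace.toDual ℝ _) (gradient v z)) z :=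
      hasGradientAt_iff_hasFDerivAt.1 (hvd z).hasGradientAt
    have h3 := h1.sub h2
    rwa [← map_sub] at h3
  -- global max of w
  obtain ⟨x₀, hmax⟩ : ∃ x₀, ∀ x, w x ≤ w x₀ := by
    have h1 : w ⁻¹' (ball (0:ℝ) (w y)) ∈ cocompact (EuclideanSpace ℝ (Fin d)) :=
      hlim (ball_mem_nhds 0 h0)
    obtain ⟨K, hK, hK2⟩ := mem_cocompact.1 h1
    have hKc : IsCompact (K ∪ {y}) := hK.union isCompact_singleton
    obtain ⟨x₀, hx₀, hmax⟩ := hKc.exists_isMaxOn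
      ⟨y, Set.mem_union_right _ rfl⟩ hwc.continuousOn
    refine ⟨x₀, fun x => ?_⟩
    by_cases hx : x ∈ K ∪ {y}
    · exact hmax hx
    · have h2 := hK2 (fun h => hx (Or.inl h))
      simp only [Set.mem_preimage, mem_ball, Real.dist_eq, sub_zero] at h2
      have h3 : w y ≤ w x₀ := hmax (Set.mem_union_right _ rfl)
      calc w x ≤ |w x| := le_abs_self _
      _ ≤ w y := le_of_lt h2
      _ ≤ w x₀ := h3
  set m : ℝ := w x₀ with hmdef
  have hm : 0 < m := lt_of_lt_of_le h0 (hmax y)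
  clear_value m
  -- radius
  obtain ⟨R, hR1, hRout⟩ : ∃ R : ℝ, 1 ≤ R ∧ ∀ x, R < dist x x₀ → |w x| < m/2 := by
    have h1 : w ⁻¹' (ball (0:ℝ) (m/2)) ∈ cocompact (EuclideanSpace ℝ (Fin d)) :=
      hlim (ball_mem_nhds 0 (by positivity))
    obtain ⟨K, hK, hK2⟩ := mem_cocompact.1 h1
    obtain ⟨r, hr⟩ := hK.isBounded.subset_closedBall x₀
    refine ⟨max r 1, le_max_right _ _, fun x hx => ?_⟩
    have hxK : x ∉ K := by
      intro h
      have h3 := hr h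
      rw [mem_closedBall] at h3
      have : r ≤ max r 1 := le_max_left _ _
      linarith
    have h2 := hK2 hxK
    simpa only [Set.mem_preimage, mem_ball, Real.dist_eq, sub_zero] using h2
  have hR0 : 0 < R := lt_of_lt_of_le one_pos hR1
  set ρ : ℝ := m / (8*R) with hρdef
  have hρ : 0 < ρ := by positivity
  clear_value ρ
  -- a.e. good set
  obtain ⟨Hu, hHu⟩ := hu.2.2.2
  obtain ⟨Hv, hHv⟩ := hv.2.2.2
  set Q : EuclideanSpace ℝ (Fin d) → Prop := fun x =>
    ((Hu x).IsSymm ∧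
      HasFDerivAt (gradient u) (Matrix.toEuclideanCLM (𝕜 := ℝ) (Hu x) :
        EuclideanSpace ℝ (Fin d) →L[ℝ] EuclideanSpace ℝ (Fin d)) x ∧
      F (Hu x) ≤ 1 ∧ (0 < u x → F (Hu x) = 1)) ∧
    ((Hv x).IsSymm ∧
      HasFDerivAt (gradient v) (Matrix.toEuclideanCLM (𝕜 := ℝ) (Hv x) :
        EuclideanSpace ℝ (Fin d) →L[ℝ] EuclideanSpace ℝ (Fin d)) x ∧
      F (Hv x) ≤ 1 ∧ (0 < v x → F (Hv x) = 1)) with hQdef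
  have haeQ : ∀ᵐ x ∂(volume : Measure (EuclideanSpace ℝ (Fin d))), Q x := by
    filter_upwards [hHu, hHv] with x h1 h2
    exact ⟨h1 (Set.mem_univ x), h2 (Set.mem_univ x)⟩
  set S : Set (EuclideanSpace ℝ (Fin d)) := {x | ¬ Q x} with hSdef
  have hSnull : volume S = 0 := haeQ
  set Z : Set (EuclideanSpace ℝ (Fin d)) := toMeasurable volume S with hZdef
  have hZnull : volume Z = 0 := by rw [hZdef, measure_toMeasurable]; exact hSnull
  have hSZ : S ⊆ Z := subset_toMeasurable _ _
  -- contact points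
  have claim : ∀ p ∈ closedBall (0 : EuclideanSpace ℝ (Fin d)) ρ,
      ∃ xp, dist xp x₀ ≤ R ∧ IsLocalMax (fun z => w z - (inner ℝ p (z - x₀) : ℝ)) xp ∧
        m/2 ≤ w xp ∧ g xp = p := by
    intro p hp
    have hpn : ‖p‖ ≤ ρ := by
      rw [mem_closedBall, dist_zero_right] at hp; exact hp
    set hpf : EuclideanSpace ℝ (Fin d) → ℝ := fun z => w z - (inner ℝ p (z - x₀) : ℝ) with hpfdef
    have hpfc : Continuous hpf := by
      apply hwc.sub
      exact continuous_const.inner (continuous_id.sub continuous_const)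
    -- key pointwise bound
    have hbd : ∀ z : EuclideanSpace ℝ (Fin d), |(inner ℝ p (z - x₀) : ℝ)| ≤ ρ * dist z x₀ := by
      intro z
      calc |(inner ℝ p (z - x₀) : ℝ)| ≤ ‖p‖ * ‖z - x₀‖ := abs_real_inner_le_norm _ _
      _ ≤ ρ * dist z x₀ := by
          rw [dist_eq_norm]
          exact mul_le_mul_of_nonneg_right hpn (norm_nonneg _)
    -- maximize over the closed ball of radius 2R
    obtain ⟨xp, hxpmem, hxpmax⟩ := (isCompact_closedBall x₀ (2*R)).exists_isMaxOn
      ⟨x₀, mem_closedBall_self (by linarith)⟩ hpfc.continuousOn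
    have hx₀mem : x₀ ∈ closedBall x₀ (2*R) := mem_closedBall_self (by linarith)
    have hval : m ≤ hpf xp := by
      have := hxpmax hx₀mem
      simpa [hpf, hmdef] using this
    have hρR : ρ * R = m / 8 := by
      rw [hρdef]; field_simp
    have hin : dist xp x₀ ≤ R := by
      by_contra hout
      push_neg at hout
      have h2 : |w xp| < m/2 := hRout xp hout
      have h3 : dist xp x₀ ≤ 2*R := mem_closedBall.1 hxpmem
      have h4 : hpf xp ≤ |w xp| + ρ * dist xp x₀ := by
        have := hbd xp
        have h5 : w xp ≤ |w xp| := le_abs_self _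
        simp only [hpf]
        have := abs_le.1 (hbd xp)
        linarith [this.1]
      have h6 : ρ * dist xp x₀ ≤ ρ * (2*R) := by
        apply mul_le_mul_of_nonneg_left h3 (le_of_lt hρ)
      have h7 : ρ * (2*R) = m/4 := by rw [hρdef]; field_simp; ring
      linarith
    have hwxp : m/2 ≤ w xp := by
      have h8 := hbd xp
      have h9 : ρ * dist xp x₀ ≤ ρ * R := mul_le_mul_of_nonneg_left hin (le_of_lt hρ)
      have h10 : hpf xp = w xp - (inner ℝ p (xp - x₀) : ℝ) := rfl
      have := abs_le.1 h8
      have h11 : w xp ≥ m + (inner ℝ p (xp - x₀) : ℝ) := by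
        have := hval
        rw [h10] at this
        linarith
      rw [hρR] at h9
      have c3 : m - ρ * dist xp x₀ ≤ w xp := by linarith [this.1, h11]
      have s1 : m/2 ≤ m - m/8 := by linarith
      have s2 : m - m/8 ≤ m - ρ * dist xp x₀ := by linarith [h9]
      exact s1.trans (s2.trans c3)
    have hloc : IsLocalMax hpf xp := by
      have hball : closedBall x₀ (2*R) ∈ nhds xp := by
        apply mem_of_superset (ball_mem_nhds xp (show (0:ℝ) < R by linarith))
        intro z hz
        rw [mem_ball] at hz
        rw [mem_closedBall]
        calc dist z x₀ ≤ dist z xp + dist xp x₀ := dist_triangle _ _ _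
        _ ≤ R + R := add_le_add (le_of_lt hz) hin
        _ = 2*R := by ring
      exact eventually_of_mem hball (fun z hz => hxpmax hz)
    -- first-order condition
    have hhp : ∀ z, HasFDerivAt hpf
        ((InnerProductSpace.toDual ℝ (EuclideanSpace ℝ (Fin d))) (g z - p)) z := by
      intro z
      have h1 : HasFDerivAt (fun z : EuclideanSpace ℝ (Fin d) => (inner ℝ p (z - x₀) : ℝ))
          ((InnerProductSpace.toDual ℝ (EuclideanSpace ℝ (Fin d))) p) z := by
        have ha : HasFDerivAt (fun z : EuclideanSpace ℝ (Fin d) => z - x₀)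
            (ContinuousLinearMap.id ℝ _) z := (hasFDerivAt_id z).sub_const x₀
        have hb := ((InnerProductSpace.toDual ℝ (EuclideanSpace ℝ (Fin d)) p).hasFDerivAt).comp z ha
        exact hb
      have h2 := (hgrad z).sub h1
      rwa [← map_sub] at h2
    have hfz : g xp - p = 0 := by
      have h3 := hloc.fderiv_eq_zero
      have h4 := (hhp xp).fderiv
      rw [h3] at h4
      have h5 := (InnerProductSpace.toDual ℝ (EuclideanSpace ℝ (Fin d))).injective
        (a₁ := g xp - p) (a₂ := 0)
      rw [map_zero] at h5
      exact h5 h4.symm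
    exact ⟨xp, hin, hloc, hwxp, by rwa [sub_eq_zero] at hfz⟩
  -- at a good contact point, the derivative of g vanishes
  have hgood : ∀ p ∈ closedBall (0 : EuclideanSpace ℝ (Fin d)) ρ, ∀ xp,
      IsLocalMax (fun z => w z - (inner ℝ p (z - x₀) : ℝ)) xp → m/2 ≤ w xp → Q xp →
      HasFDerivAt g (0 : EuclideanSpace ℝ (Fin d) →L[ℝ] EuclideanSpace ℝ (Fin d)) xp := by
    intro p hp xp hloc hwxp hQ
    obtain ⟨⟨hQu1, hQu2, hQu3, hQu4⟩, hQv1, hQv2, hQv3, hQv4⟩ := hQ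
    have hupos : 0 < u xp := by
      have hv0 : 0 ≤ v xp := hv.2.2.1 xp (Set.mem_univ _)
      have hw : w xp = u xp - v xp := by rw [hwdef]
      linarith
    have hFu1 : F (Hu xp) = 1 := hQu4 hupos
    set D : EuclideanSpace ℝ (Fin d) →L[ℝ] EuclideanSpace ℝ (Fin d) :=
      (Matrix.toEuclideanCLM (𝕜 := ℝ) (Hu xp) :
        EuclideanSpace ℝ (Fin d) →L[ℝ] EuclideanSpace ℝ (Fin d))
        - Matrix.toEuclideanCLM (𝕜 := ℝ) (Hv xp) with hDdef
    have hD : HasFDerivAt g D xp := hQu2.sub hQv2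
    have hD' : HasFDerivAt (fun z => g z - p) D xp := hD.sub_const p
    have hhp : ∀ z, HasFDerivAt (fun z => w z - (inner ℝ p (z - x₀) : ℝ))
        ((InnerProductSpace.toDual ℝ (EuclideanSpace ℝ (Fin d))) (g z - p)) z := by
      intro z
      have h1 : HasFDerivAt (fun z : EuclideanSpace ℝ (Fin d) => (inner ℝ p (z - x₀) : ℝ))
          ((InnerProductSpace.toDual ℝ (EuclideanSpace ℝ (Fin d))) p) z := by
        have ha : HasFDerivAt (fun z : EuclideanSpace ℝ (Fin d) => z - x₀)
            (ContinuousLinearMap.id ℝ _) z := (hasFDerivAt_id z).sub_const x₀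
        have hb := ((InnerProductSpace.toDual ℝ (EuclideanSpace ℝ (Fin d)) p).hasFDerivAt).comp z ha
        exact hb
      have h2 := (hgrad z).sub h1
      rwa [← map_sub] at h2
    have h2nd : ∀ ξ : EuclideanSpace ℝ (Fin d), (inner ℝ ξ (D ξ) : ℝ) ≤ 0 := by
      intro ξ
      exact dir_second_deriv_test hhp hD' hloc
    have hceq := contact_clm_eq hell hQu1 hQv1 hFu1 hQv3 h2nd
    have hD0 : D = 0 := by rw [hDdef, sub_eq_zero]; exact hceq
    rwa [hD0] at hD
  -- Sard set
  set s : Set (EuclideanSpace ℝ (Fin d)) :=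
    (closedBall x₀ R ∩ Zᶜ) ∩ {x | DifferentiableAt ℝ g x ∧ fderiv ℝ g x = 0} with hsdef
  have hsm : MeasurableSet s := by
    refine (measurableSet_closedBall.inter (measurableSet_toMeasurable _ _).compl).inter ?_
    have : {x | DifferentiableAt ℝ g x ∧ fderiv ℝ g x = 0}
        = {x | DifferentiableAt ℝ g x} ∩ (fderiv ℝ g) ⁻¹' {0} := by
      ext x; simp [Set.mem_setOf_eq]
    rw [this]
    exact (measurableSet_of_differentiableAt ℝ g).inter
      ((measurable_fderiv ℝ g) (measurableSet_singleton 0))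
  have himage1 : volume (g '' s) = 0 := by
    have hb := addHaar_image_le_lintegral_abs_det_fderiv (volume : Measure (EuclideanSpace ℝ (Fin d)))
      hsm (f' := fun _ => (0 : EuclideanSpace ℝ (Fin d) →L[ℝ] EuclideanSpace ℝ (Fin d)))
      (f := g) ?_
    · refine le_antisymm (hb.trans ?_) zero_le
      have hdet : ((0 : EuclideanSpace ℝ (Fin d) →L[ℝ] EuclideanSpace ℝ (Fin d)) :
          EuclideanSpace ℝ (Fin d) →ₗ[ℝ] EuclideanSpace ℝ (Fin d)).det = 0 := by
        rw [ContinuousLinearMap.coe_zero, LinearMap.det_zero]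
        have : Module.finrank ℝ (EuclideanSpace ℝ (Fin d)) = d := finrank_euclideanSpace_fin
        rw [this]
        exact zero_pow (by omega)
      simp only [ContinuousLinearMap.det, hdet, abs_zero, ENNReal.ofReal_zero,
        lintegral_const, zero_mul, le_refl]
    · intro x hx
      have h1 : HasFDerivAt g
          (0 : EuclideanSpace ℝ (Fin d) →L[ℝ] EuclideanSpace ℝ (Fin d)) x := by
        have := hx.2.1.hasFDerivAt
        rwa [hx.2.2] at this
      exact h1.hasFDerivWithinAt
  have himage2 : volume (g '' (Z ∩ closedBall x₀ R)) = 0 := by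
    have hnbhd : ∀ x : EuclideanSpace ℝ (Fin d), ∃ t : Set (EuclideanSpace ℝ (Fin d)),
        (∃ K : NNReal, LipschitzOnWith K g t) ∧ t ∈ nhds x := by
      intro x
      obtain ⟨K1, t1, ht1, hl1⟩ := hu.2.1 x (Set.mem_univ x)
      obtain ⟨K2, t2, ht2, hl2⟩ := hv.2.1 x (Set.mem_univ x)
      rw [nhdsWithin_univ] at ht1 ht2
      refine ⟨t1 ∩ t2, ⟨K1 + K2, ?_⟩, Filter.inter_mem ht1 ht2⟩
      exact lipschitzOnWith_sub (hl1.mono Set.inter_subset_left)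
        (hl2.mono Set.inter_subset_right)
    choose t hlip ht using hnbhd
    obtain ⟨c, hc, hcov⟩ := TopologicalSpace.countable_cover_nhds ht
    have hsub : g '' (Z ∩ closedBall x₀ R) ⊆
        ⋃ x ∈ c, g '' ((Z ∩ closedBall x₀ R) ∩ t x) := by
      rintro q ⟨z, hz, rfl⟩
      have hzin : z ∈ ⋃ x ∈ c, t x := by rw [hcov]; trivial
      obtain ⟨x, hx, hz2⟩ := Set.mem_iUnion₂.1 hzin
      exact Set.mem_iUnion₂.2 ⟨x, hx, Set.mem_image_of_mem g ⟨hz, hz2⟩⟩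
    refine le_antisymm ((measure_mono hsub).trans (le_of_eq ?_)) zero_le
    refine (measure_biUnion_null_iff hc).2 (fun x _ => ?_)
    obtain ⟨K, hK⟩ := hlip x
    exact lip_image_null (hK.mono Set.inter_subset_right)
      (measure_mono_null (Set.inter_subset_left.trans Set.inter_subset_left) hZnull)
  -- covering
  have hcover : closedBall (0 : EuclideanSpace ℝ (Fin d)) ρ ⊆
      g '' s ∪ g '' (Z ∩ closedBall x₀ R) := by
    intro p hp
    obtain ⟨xp, hxp1, hxp2, hxp3, hxp4⟩ := claim p hp
    by_cases hz : xp ∈ Z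
    · right
      exact ⟨xp, ⟨hz, mem_closedBall.2 hxp1⟩, hxp4⟩
    · left
      have hQ : Q xp := by
        by_contra hq
        exact hz (hSZ hq)
      have h5 := hgood p hp xp hxp2 hxp3 hQ
      exact ⟨xp, ⟨⟨mem_closedBall.2 hxp1, hz⟩, h5.differentiableAt, h5.fderiv⟩, hxp4⟩
  have : volume (closedBall (0 : EuclideanSpace ℝ (Fin d)) ρ) = 0 := by
    refine le_antisymm ((measure_mono hcover).trans ?_) zero_le
    calc volume (g '' s ∪ g '' (Z ∩ closedBall x₀ R))
        ≤ volume (g '' s) + volume (g '' (Z ∩ closedBall x₀ R)) := measure_union_le _ _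
    _ = 0 := by rw [himage1, himage2, add_zero]
  exact absurd this (measure_closedBall_pos volume (0 : EuclideanSpace ℝ (Fin d)) hρ).ne'

/-- Two global solutions that agree at infinity coincide. -/
theorem statement10 (d : ℕ) (hd : 3 ≤ d) (Λ : ℝ)
    (F : Matrix (Fin d) (Fin d) ℝ → ℝ) (hF : IsGoodOperator F Λ)
    (u v : EuclideanSpace ℝ (Fin d) → ℝ)
    (hu : IsSolutionOn F u Set.univ) (hv : IsSolutionOn F v Set.univ)
    (hlim : Tendsto (fun x => u x - v x)
      (Filter.cocompact (EuclideanSpace ℝ (Fin d))) (nhds 0)) :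
    u = v := by
  have hlim' : Tendsto (fun x => v x - u x)
      (Filter.cocompact (EuclideanSpace ℝ (Fin d))) (nhds 0) := by
    have := hlim.neg
    simp only [neg_sub, neg_zero] at this
    exact this
  funext x
  exact le_antisymm (one_sided hd hF.1 hu hv hlim x) (one_sided hd hF.1 hv hu hlim' x)
end

section
/- Let A ∈ S_d, suppose F is differentiable at A with Fréchet derivative DF(A) equal to the trace functional (DF(A)[M] = tr(M) for all M ∈ S_d), and for r > 0 define Ψ_r(x) := r^{1/2}|x|^{−1/2} on ℝ^d ∖ {0}, whose Hessian is D²Ψ_r(x) = ½ r^{1/2}|x|^{−5/2}((5/2)(x⊗x)/|x|² − I). Then there exists r̄ > 1 such that F(A + D²Ψ_{r̄}(x)) ≤ F(A) for every x with |x| ≥ r̄. -/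
open MeasureTheory Metric Filter

attribute [local instance] Matrix.normedAddCommGroup Matrix.normedSpace

/-- The Hessian of `Ψ_r(x) = r^{1/2}|x|^{-1/2}`. -/
noncomputable def psiHess (d : ℕ) (r : ℝ) (x : EuclideanSpace ℝ (Fin d)) :
    Matrix (Fin d) (Fin d) ℝ :=
  ((1/2) * r ^ ((1 : ℝ)/2) * ‖x‖ ^ (-((5 : ℝ)/2))) •
    (((5 : ℝ)/2 / ‖x‖ ^ 2) • Matrix.vecMulVec (fun i => x i) (fun i => x i) - 1)

set_option maxHeartbeats 1000000

/-- The barrier `Ψ_{r̄}` is a supersolution far out: `F(A + D²Ψ_{r̄}) ≤ F(A)`. -/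
theorem statement13 (d : ℕ) (hd : 3 ≤ d) (Λ : ℝ)
    (F : Matrix (Fin d) (Fin d) ℝ → ℝ) (hF : IsGoodOperator F Λ)
    (A : Matrix (Fin d) (Fin d) ℝ) (hAs : A.IsSymm)
    (L : Matrix (Fin d) (Fin d) ℝ →L[ℝ] ℝ)
    (hL : ∀ M : Matrix (Fin d) (Fin d) ℝ, M.IsSymm → L M = M.trace)
    (hDF : HasFDerivWithinAt F L {M : Matrix (Fin d) (Fin d) ℝ | M.IsSymm} A) :
    ∃ rBar : ℝ, 1 < rBar ∧
      ∀ x : EuclideanSpace ℝ (Fin d), rBar ≤ ‖x‖ →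
        F (A + psiHess d rBar x) ≤ F A := by
  have hev := hDF.isLittleO.def (show (0:ℝ) < 1/14 by norm_num)
  rw [Filter.eventually_iff, Metric.mem_nhdsWithin_iff] at hev
  obtain ⟨δ, hδ, hball⟩ := hev
  set rBar := max 2 (Real.sqrt (7/(4*δ)) + 1) with hrdef
  have hr2 : (2:ℝ) ≤ rBar := le_max_left _ _
  have hr1 : (1:ℝ) < rBar := by linarith
  have hrpos : (0:ℝ) < rBar := by linarith
  refine ⟨rBar, hr1, fun x hx => ?_⟩
  have hx0 : (0:ℝ) < ‖x‖ := by linarith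
  set c : ℝ := (1/2) * rBar ^ ((1 : ℝ)/2) * ‖x‖ ^ (-((5 : ℝ)/2)) with hc
  have hcpos : 0 < c := by positivity
  set P := psiHess d rBar x with hP
  -- symmetry
  have hPsymm : P.IsSymm := by
    ext i j
    simp only [hP, psiHess, Matrix.transpose_apply, Matrix.smul_apply, Matrix.sub_apply,
      Matrix.vecMulVec_apply, Matrix.one_apply, smul_eq_mul]
    by_cases h : i = j
    · simp [h, mul_comm]
    · have h2 : ¬ j = i := fun hji => h hji.symm
      simp [h, h2, mul_comm]
  have hAP : (A + P).IsSymm := hAs.add hPsymm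
  -- coordinate bound
  have hcoord : ∀ i, |x i| ≤ ‖x‖ := by
    intro i
    have h1 : (x i)^2 ≤ ∑ j, (x j)^2 :=
      Finset.single_le_sum (f := fun j => (x j)^2) (fun j _ => sq_nonneg _) (Finset.mem_univ i)
    have h2 : ‖x‖^2 = ∑ j, (x j)^2 := by
      rw [EuclideanSpace.norm_eq, Real.sq_sqrt (by positivity)]
      simp [Real.norm_eq_abs, sq_abs]
    nlinarith [abs_nonneg (x i), sq_abs (x i), norm_nonneg x]
  -- norm bound
  have hxsq : (0:ℝ) < ‖x‖^2 := by positivity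
  have hnorm : ‖P‖ ≤ (7/2)*c := by
    rw [Matrix.norm_le_iff (by positivity)]
    intro i j
    simp only [hP, psiHess, Matrix.smul_apply, Matrix.sub_apply, Matrix.vecMulVec_apply,
      Matrix.one_apply, smul_eq_mul, Real.norm_eq_abs, ← hc]
    have hb : |(5:ℝ)/2 / ‖x‖ ^ 2 * (x i * x j)| ≤ 5/2 := by
      rw [abs_mul, abs_div, abs_mul]
      have : |x i| * |x j| ≤ ‖x‖^2 := by
        have := mul_le_mul (hcoord i) (hcoord j) (abs_nonneg _) (norm_nonneg x)
        nlinarith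
      rw [abs_of_nonneg (by norm_num : (0:ℝ) ≤ (5:ℝ)/2), abs_of_nonneg hxsq.le]
      rw [div_mul_eq_mul_div, div_le_iff₀ hxsq]
      nlinarith
    have hone : |(if i = j then (1:ℝ) else 0)| ≤ 1 := by split <;> simp
    rw [abs_mul, abs_of_nonneg hcpos.le]
    calc c * |(5:ℝ)/2 / ‖x‖ ^ 2 * (x i * x j) - (if i = j then (1:ℝ) else 0)|
        ≤ c * (5/2 + 1) := by
          apply mul_le_mul_of_nonneg_left _ hcpos.le
          calc |(5:ℝ)/2 / ‖x‖ ^ 2 * (x i * x j) - (if i = j then (1:ℝ) else 0)|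
              ≤ |(5:ℝ)/2 / ‖x‖ ^ 2 * (x i * x j)| + |(if i = j then (1:ℝ) else 0)| :=
                abs_sub _ _
            _ ≤ 5/2 + 1 := add_le_add hb hone
      _ = (7/2)*c := by ring
  -- c small : c ≤ (1/2) * rBar^(-2)
  have hcbound : c ≤ (1/2) * (rBar^2)⁻¹ := by
    have h1 : ‖x‖ ^ (-((5:ℝ)/2)) ≤ rBar ^ (-((5:ℝ)/2)) :=
      Real.rpow_le_rpow_of_nonpos hrpos hx (by norm_num)
    have h2 : rBar ^ ((1:ℝ)/2) * rBar ^ (-((5:ℝ)/2)) = (rBar^2)⁻¹ := by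
      rw [← Real.rpow_add hrpos]
      norm_num
    calc c ≤ (1/2) * rBar ^ ((1:ℝ)/2) * rBar ^ (-((5:ℝ)/2)) := by
          apply mul_le_mul_of_nonneg_left h1 (by positivity)
      _ = (1/2) * (rBar^2)⁻¹ := by rw [mul_assoc, h2]
  have hcδ : (7/2)*c < δ := by
    have hs : Real.sqrt (7/(4*δ)) + 1 ≤ rBar := le_max_right _ _
    have hsq : Real.sqrt (7/(4*δ))^2 = 7/(4*δ) := Real.sq_sqrt (by positivity)
    have hsn : 0 ≤ Real.sqrt (7/(4*δ)) := Real.sqrt_nonneg _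
    have hrsq : 7/(4*δ) < rBar^2 := by nlinarith
    have h74 : 7/4 < δ * rBar^2 := by
      rw [div_lt_iff₀ (by positivity)] at hrsq
      nlinarith
    have : (7/4) * (rBar^2)⁻¹ < δ := by
      rw [mul_inv_lt_iff₀ (by positivity)]
      linarith [h74]
    nlinarith [hcbound]
  -- apply the little-o bound
  have hmem : A + P ∈ Metric.ball A δ ∩ {M : Matrix (Fin d) (Fin d) ℝ | M.IsSymm} := by
    constructor
    · rw [Metric.mem_ball, dist_eq_norm, add_sub_cancel_left]
      linarith [hnorm, hcδ, hcpos]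
    · exact hAP
  have h1 := hball hmem
  simp only [Set.mem_setOf_eq, add_sub_cancel_left] at h1
  -- trace computation
  have hVtr : (Matrix.vecMulVec (fun i => x i) (fun i => x i)).trace = ‖x‖^2 := by
    rw [EuclideanSpace.norm_eq, Real.sq_sqrt (by positivity)]
    simp [Matrix.trace, Matrix.diag, Matrix.vecMulVec_apply, Real.norm_eq_abs, sq_abs, sq]
  have htr : P.trace = c * (5/2 - d) := by
    simp only [hP, psiHess, Matrix.trace_smul, Matrix.trace_sub, Matrix.trace_one, hVtr,
      smul_eq_mul, ← hc]
    rw [div_mul_cancel₀ _ hxsq.ne']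
    simp [Fintype.card_fin]
  have hLP : L P = c * (5/2 - d) := by rw [hL P hPsymm, htr]
  -- finish
  rw [Real.norm_eq_abs] at h1
  have habs : F (A + P) - F A - L P ≤ 1/14 * ‖P‖ := by
    convert (abs_le.mp h1).2 using 3 <;> rfl
  have hd3 : (3:ℝ) ≤ (d:ℝ) := by exact_mod_cast hd
  nlinarith [hnorm, hcpos, norm_nonneg P]
end
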